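/- Let 𝒮 ⊆ 𝔹 support a spherical 2-design, and let O ∈ ℝ^{ℓ×ℓ} be an orthogonal matrix with O u_ℓ = u_ℓ. Then O ∈ ddi_𝔹(𝒮); that is, Oᵀ u_ℓ = u_ℓ, 𝒮 ⊆ O𝔹, and every N ∈ ℳ_𝔹(𝒮) (with n = ℓ) satisfies det(NᵀN) ≥ 1 = det(OᵀO). -/

import Mathlib

open Matrix

/-- The ball `𝔹` of states: vectors on the hyperplane `uₗ ⬝ v = 1` with norm at most one. -/
def stateBall (ℓ : ℕ) : Set (Fin ℓ → ℝ) :=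
  {v | (1 : Fin ℓ → ℝ) ⬝ᵥ v = 1 ∧ v ⬝ᵥ v ≤ 1}

/-- The set `ℳ_𝕊(𝒬)` of quasi-measurements from `𝕊` consistent with `𝒬` (case `n = ℓ`). -/
def consistentSet {ℓ : ℕ} (𝕊 𝒬 : Set (Fin ℓ → ℝ)) : Set (Matrix (Fin ℓ) (Fin ℓ) ℝ) :=
  {M | Mᵀ *ᵥ (1 : Fin ℓ → ℝ) = (1 : Fin ℓ → ℝ) ∧ 𝒬 ⊆ (fun v => M *ᵥ v) '' 𝕊}

lemma vecMulVec_mulVec' {m n : Type*} [Fintype n] (a : m → ℝ) (b x : n → ℝ) :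
    vecMulVec a b *ᵥ x = (b ⬝ᵥ x) • a := by
  ext i
  simp [mulVec, vecMulVec_apply, dotProduct, Finset.mul_sum, Finset.sum_mul, mul_comm, mul_assoc, mul_left_comm]

lemma mul_vecMulVec_mul {ℓ : ℕ} (M : Matrix (Fin ℓ) (Fin ℓ) ℝ) (a b : Fin ℓ → ℝ) :
    M * vecMulVec a b * Mᵀ = vecMulVec (M *ᵥ a) (M *ᵥ b) := by
  ext i j
  simp only [mul_apply, vecMulVec_apply, mulVec, dotProduct, transpose_apply,
    Finset.sum_mul, Finset.mul_sum]
  exact Finset.sum_congr rfl fun l _ => Finset.sum_congr rfl fun k _ => by ring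

lemma sum_mulVec' {k ℓ : ℕ} (M : Fin k → Matrix (Fin ℓ) (Fin ℓ) ℝ) (x : Fin ℓ → ℝ) :
    (∑ i, M i) *ᵥ x = ∑ i, M i *ᵥ x := by
  ext j
  simp [mulVec, dotProduct, Matrix.sum_apply, Finset.sum_mul]
  rw [Finset.sum_comm]

lemma dotProduct_sum' {k ℓ : ℕ} (x : Fin ℓ → ℝ) (w : Fin k → Fin ℓ → ℝ) :
    x ⬝ᵥ (∑ i, w i) = ∑ i, x ⬝ᵥ w i := by
  simp [dotProduct, Finset.sum_apply, Finset.mul_sum]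
  rw [Finset.sum_comm]

lemma psd_det_nonneg {ℓ : ℕ} {A : Matrix (Fin ℓ) (Fin ℓ) ℝ} (hA : A.PosSemidef) :
    0 ≤ A.det := by
  have hH := hA.isHermitian
  have : A.det = ∏ i, hH.eigenvalues i := by simpa using hH.det_eq_prod_eigenvalues
  rw [this]
  exact Finset.prod_nonneg fun i _ => hA.eigenvalues_nonneg i

lemma trace_eq_sum_eig {ℓ : ℕ} {A : Matrix (Fin ℓ) (Fin ℓ) ℝ} (hH : A.IsHermitian) :
    A.trace = ∑ i, hH.eigenvalues i := by
  nth_rewrite 1 [hH.spectral_theorem]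
  rw [Unitary.conjStarAlgAut_apply]
  rw [trace_mul_cycle, (Matrix.mem_unitaryGroup_iff').mp (hH.eigenvectorUnitary).2, one_mul,
    trace_diagonal]
  simp

lemma det_le_amgm {ℓ : ℕ} (hℓ : 0 < ℓ) {A : Matrix (Fin ℓ) (Fin ℓ) ℝ}
    (hA : A.PosSemidef) (htr : A.trace ≤ 1) : A.det ≤ ((ℓ : ℝ)⁻¹) ^ ℓ := by
  have hH := hA.isHermitian
  have hnn : ∀ i, 0 ≤ hH.eigenvalues i := hA.eigenvalues_nonneg
  have hℓ' : (ℓ : ℝ) ≠ 0 := Nat.cast_ne_zero.mpr hℓ.ne'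
  have hdet : A.det = ∏ i, hH.eigenvalues i := by
    simpa using hH.det_eq_prod_eigenvalues
  have hgm := Real.geom_mean_le_arith_mean_weighted Finset.univ
      (fun _ => (ℓ : ℝ)⁻¹) hH.eigenvalues (fun i _ => by positivity)
      (by simp [Finset.card_univ, mul_comm]; field_simp) (fun i _ => hnn i)
  have hsum : ∑ i, (ℓ : ℝ)⁻¹ * hH.eigenvalues i ≤ (ℓ : ℝ)⁻¹ := by
    rw [← Finset.mul_sum, ← trace_eq_sum_eig hH]
    have : (0:ℝ) ≤ (ℓ : ℝ)⁻¹ := by positivity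
    nlinarith
  set P := ∏ i, hH.eigenvalues i ^ ((ℓ : ℝ)⁻¹) with hPdef
  have hP0 : 0 ≤ P := Finset.prod_nonneg fun i _ => Real.rpow_nonneg (hnn i) _
  have hPle : P ≤ (ℓ : ℝ)⁻¹ := hgm.trans hsum
  have hpow : P ^ ℓ ≤ ((ℓ : ℝ)⁻¹) ^ ℓ := pow_le_pow_left₀ hP0 hPle ℓ
  have hPl : P ^ ℓ = ∏ i, hH.eigenvalues i := by
    rw [hPdef, ← Finset.prod_pow]
    refine Finset.prod_congr rfl fun i _ => ?_
    rw [← Real.rpow_natCast (hH.eigenvalues i ^ ((ℓ:ℝ)⁻¹)) ℓ, ← Real.rpow_mul (hnn i),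
      inv_mul_cancel₀ hℓ', Real.rpow_one]
  rw [hdet, ← hPl]
  exact hpow

/-- If `𝒮 ⊆ 𝔹` supports a spherical 2-design and `O` is an orthogonal
matrix fixing the all-ones vector, then `O` belongs to the output of the data-driven
inference map `ddi_𝔹(𝒮)`: it is consistent with `𝒮`, `det (Oᵀ O) = 1`, and every
quasi-measurement `N` consistent with `𝒮` on the ball satisfies `det (Nᵀ N) ≥ 1`. -/
theorem stmt1 (ℓ : ℕ) (hℓ : 0 < ℓ)
    (𝒮 : Set (Fin ℓ → ℝ)) (h𝒮 : 𝒮 ⊆ stateBall ℓ)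
    (k : ℕ) (s : Fin k → (Fin ℓ → ℝ)) (p : Fin k → ℝ)
    (hs : ∀ i, s i ∈ 𝒮)
    (hpure : ∀ i, (1 : Fin ℓ → ℝ) ⬝ᵥ s i = 1 ∧ s i ⬝ᵥ s i = 1)
    (hp : ∀ i, 0 ≤ p i) (hpsum : ∑ i, p i = 1)
    (hdesign : ∑ i, p i • vecMulVec (s i) (s i) = (ℓ : ℝ)⁻¹ • (1 : Matrix (Fin ℓ) (Fin ℓ) ℝ))
    (O : Matrix (Fin ℓ) (Fin ℓ) ℝ) (hO : Oᵀ * O = 1)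
    (hOu : O *ᵥ (1 : Fin ℓ → ℝ) = (1 : Fin ℓ → ℝ)) :
    (Oᵀ *ᵥ (1 : Fin ℓ → ℝ) = (1 : Fin ℓ → ℝ) ∧ 𝒮 ⊆ (fun v => O *ᵥ v) '' stateBall ℓ) ∧
      (Oᵀ * O).det = 1 ∧
      ∀ N ∈ consistentSet (stateBall ℓ) 𝒮, 1 ≤ (Nᵀ * N).det := by
  have hOO' : O * Oᵀ = 1 := mul_eq_one_comm.mp hO
  refine ⟨⟨?_, ?_⟩, ?_, ?_⟩
  · nth_rewrite 1 [← hOu]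
    rw [mulVec_mulVec, hO, one_mulVec]
  · intro x hx
    obtain ⟨hx1, hx2⟩ := h𝒮 hx
    refine ⟨Oᵀ *ᵥ x, ⟨?_, ?_⟩, ?_⟩
    · rw [dotProduct_mulVec, vecMul_transpose, hOu, hx1]
    · calc (Oᵀ *ᵥ x) ⬝ᵥ (Oᵀ *ᵥ x) = vecMul (Oᵀ *ᵥ x) Oᵀ ⬝ᵥ x := dotProduct_mulVec _ _ _
        _ = (O *ᵥ (Oᵀ *ᵥ x)) ⬝ᵥ x := by rw [vecMul_transpose]
        _ = x ⬝ᵥ x := by rw [mulVec_mulVec, hOO', one_mulVec]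
        _ ≤ 1 := hx2
    · simp only
      rw [mulVec_mulVec, hOO', one_mulVec]
  · rw [hO, det_one]
  · rintro N ⟨hNu, hNim⟩
    have hch : ∀ i, ∃ x, x ∈ stateBall ℓ ∧ N *ᵥ x = s i := by
      intro i
      obtain ⟨x, hx, hNx⟩ := hNim (hs i)
      exact ⟨x, hx, hNx⟩
    choose v hvB hvN using hch
    set A : Matrix (Fin ℓ) (Fin ℓ) ℝ := ∑ i, p i • vecMulVec (v i) (v i) with hAdef
    have hNAN : N * A * Nᵀ = (ℓ : ℝ)⁻¹ • 1 := by
      rw [hAdef, Finset.mul_sum, Finset.sum_mul, ← hdesign]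
      refine Finset.sum_congr rfl fun i _ => ?_
      rw [mul_smul_comm, smul_mul_assoc, mul_vecMulVec_mul, hvN]
    -- PSD
    have hApsd : A.PosSemidef := by
      rw [posSemidef_iff_dotProduct_mulVec]
      constructor
      · show Aᴴ = A
        rw [hAdef]
        simp only [conjTranspose_sum, conjTranspose_smul]
        refine Finset.sum_congr rfl fun i _ => ?_
        congr 1
        ext a b
        simp [vecMulVec_apply, conjTranspose_apply, mul_comm]
      · intro x
        show 0 ≤ star x ⬝ᵥ (A *ᵥ x)
        rw [hAdef]
        have : (∑ i, p i • vecMulVec (v i) (v i)) *ᵥ x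
            = ∑ i, (p i * (v i ⬝ᵥ x)) • v i := by
          rw [sum_mulVec']
          refine Finset.sum_congr rfl fun i _ => ?_
          rw [smul_mulVec, vecMulVec_mulVec', smul_smul]
        rw [this, dotProduct_sum']
        refine Finset.sum_nonneg fun i _ => ?_
        rw [dotProduct_smul]
        have hstar : star x ⬝ᵥ v i = x ⬝ᵥ v i := rfl
        have : v i ⬝ᵥ x = x ⬝ᵥ v i := dotProduct_comm _ _
        rw [smul_eq_mul, hstar, this, mul_assoc]
        exact mul_nonneg (hp i) (mul_self_nonneg _)
    -- trace bound
    have htr : A.trace ≤ 1 := by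
      rw [hAdef, trace_sum]
      calc ∑ i, (p i • vecMulVec (v i) (v i)).trace
          = ∑ i, p i * (v i ⬝ᵥ v i) := by
            refine Finset.sum_congr rfl fun i _ => ?_
            rw [trace_smul, smul_eq_mul]
            simp [Matrix.trace, Matrix.diag, vecMulVec_apply, dotProduct]
        _ ≤ ∑ i, p i * 1 := by
            refine Finset.sum_le_sum fun i _ => ?_
            exact mul_le_mul_of_nonneg_left (hvB i).2 (hp i)
        _ = 1 := by simpa using hpsum
    have hdetA_le : A.det ≤ ((ℓ : ℝ)⁻¹) ^ ℓ := det_le_amgm hℓ hApsd htr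
    have hdetA_nonneg : 0 ≤ A.det := psd_det_nonneg hApsd
    have hdeteq : N.det * A.det * N.det = ((ℓ : ℝ)⁻¹) ^ ℓ := by
      have := congrArg Matrix.det hNAN
      rwa [det_mul, det_mul, det_transpose, det_smul, det_one, Fintype.card_fin, mul_one] at this
    have hpos : (0:ℝ) < ((ℓ : ℝ)⁻¹) ^ ℓ := by positivity
    have hdetA_pos : 0 < A.det := by
      rcases lt_or_eq_of_le hdetA_nonneg with h | h
      · exact h
      · exfalso
        have h0 : (0:ℝ) = ((ℓ : ℝ)⁻¹) ^ ℓ := by rw [← hdeteq, ← h]; ring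
        exact hpos.ne' h0.symm
    have hNN : (Nᵀ * N).det = N.det * N.det := by rw [det_mul, det_transpose]
    rw [hNN]
    have h1 : N.det * N.det = ((ℓ : ℝ)⁻¹) ^ ℓ / A.det := by
      field_simp at hdeteq ⊢
      linarith [hdeteq]
    rw [h1]
    rw [le_div_iff₀ hdetA_pos, one_mul]
    exact hdetA_le
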